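/- Let (a_i)_{i≥1} be real numbers with 0 < |a_i| ≤ 1/2 for all i, and set A_0 = 1 and A_i = a_1 a_2 ⋯ a_i for i ≥ 1. Let (φ_i)_{i≥0} be continuous functions from [−1,1] to ℝ with ‖φ_i‖_∞ ≤ C for all i. For each j ≥ 0 define g_j : [−1,1] → ℝ by g_j(τ) = − Σ_{i=j}^{∞} (A_{i+1}/A_j) · φ_i( (A_{i+1}/A_j) τ ). Then each series converges absolutely and uniformly, each g_j is continuous with ‖g_j‖_∞ ≤ C, and the family satisfies the recursion g_j(τ) = a_{j+1} · g_{j+1}(a_{j+1} τ) − a_{j+1} · φ_j(a_{j+1} τ) for every j ≥ 0 and τ ∈ [−1,1]. -/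

import Mathlib

/-!
Converse direction for the scaling recursion: the tail series
`g_j(τ) = − Σ_{i≥j} (A_{i+1}/A_j) φ_i((A_{i+1}/A_j)τ)` define continuous functions, bounded
by `C`, solving `g_j(τ) = a_{j+1} g_{j+1}(a_{j+1}τ) − a_{j+1} φ_j(a_{j+1}τ)`, with absolute
and uniform convergence of each series.  (Here `a j` stands for `a_{j+1}`, so that
`A_i = ∏_{j < i} a j` and the tail series is reindexed by `i = j + k`.)
-/

open Filter

set_option maxHeartbeats 800000

noncomputable section

private lemma tuo_neg {α : Type*} {F : ℕ → α → ℝ} {f : α → ℝ}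
    {s : Set α} (h : TendstoUniformlyOn F f atTop s) :
    TendstoUniformlyOn (fun n x => -(F n x)) (fun x => -f x) atTop s := by
  rw [Metric.tendstoUniformlyOn_iff] at h ⊢
  intro ε hε
  filter_upwards [h ε hε] with n hn x hx
  simpa [Real.dist_eq, abs_sub_comm] using hn x hx

theorem straight_section_series_converse
    (a : ℕ → ℝ) (ha0 : ∀ i, a i ≠ 0) (ha : ∀ i, |a i| ≤ 1 / 2)
    (C : ℝ) (φ : ℕ → ℝ → ℝ)
    (hφc : ∀ i, ContinuousOn (φ i) (Set.Icc (-1) 1))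
    (hφb : ∀ i : ℕ, ∀ τ ∈ Set.Icc (-1 : ℝ) 1, |φ i τ| ≤ C)
    (A : ℕ → ℝ) (hA : ∀ i, A i = ∏ j ∈ Finset.range i, a j)
    (g : ℕ → ℝ → ℝ)
    (hg : ∀ (j : ℕ) (τ : ℝ),
      g j τ = - ∑' k : ℕ, (A (j + k + 1) / A j) * φ (j + k) ((A (j + k + 1) / A j) * τ)) :
    (∀ j : ℕ, ∀ τ ∈ Set.Icc (-1 : ℝ) 1,
      Summable (fun k : ℕ => |(A (j + k + 1) / A j) * φ (j + k) ((A (j + k + 1) / A j) * τ)|)) ∧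
    (∀ j : ℕ, TendstoUniformlyOn
      (fun (N : ℕ) (τ : ℝ) =>
        - ∑ k ∈ Finset.range N, (A (j + k + 1) / A j) * φ (j + k) ((A (j + k + 1) / A j) * τ))
      (g j) atTop (Set.Icc (-1) 1)) ∧
    (∀ j : ℕ, ContinuousOn (g j) (Set.Icc (-1) 1)) ∧
    (∀ j : ℕ, ∀ τ ∈ Set.Icc (-1 : ℝ) 1, |g j τ| ≤ C) ∧
    (∀ j : ℕ, ∀ τ ∈ Set.Icc (-1 : ℝ) 1,
      g j τ = a j * g (j + 1) (a j * τ) - a j * φ j (a j * τ)) := by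
  have hAne : ∀ i, A i ≠ 0 := by
    intro i
    rw [hA]
    exact Finset.prod_ne_zero_iff.mpr fun j _ => ha0 j
  have hC : 0 ≤ C := le_trans (abs_nonneg _) (hφb 0 0 (by norm_num))
  have hratio : ∀ j k : ℕ, A (j + k + 1) / A j = ∏ i ∈ Finset.range (k + 1), a (j + i) := by
    intro j k
    rw [hA, hA, show j + k + 1 = j + (k + 1) by ring, Finset.prod_range_add]
    exact mul_div_cancel_left₀ _ (by rw [← hA]; exact hAne j)
  have hrabs : ∀ j k : ℕ, |A (j + k + 1) / A j| ≤ (1 / 2 : ℝ) ^ (k + 1) := by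
    intro j k
    rw [hratio, Finset.abs_prod]
    calc ∏ i ∈ Finset.range (k + 1), |a (j + i)|
        ≤ ∏ i ∈ Finset.range (k + 1), (1 / 2 : ℝ) :=
          Finset.prod_le_prod (fun i _ => abs_nonneg _) (fun i _ => ha _)
      _ = (1 / 2 : ℝ) ^ (k + 1) := by simp
  have hrone : ∀ j k : ℕ, |A (j + k + 1) / A j| ≤ 1 :=
    fun j k => le_trans (hrabs j k) (pow_le_one₀ (by norm_num) (by norm_num))
  have hmem : ∀ j k : ℕ, ∀ τ ∈ Set.Icc (-1 : ℝ) 1,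
      (A (j + k + 1) / A j) * τ ∈ Set.Icc (-1 : ℝ) 1 := by
    intro j k τ hτ
    have hτ' : |τ| ≤ 1 := abs_le.mpr ⟨hτ.1, hτ.2⟩
    have : |(A (j + k + 1) / A j) * τ| ≤ 1 := by
      rw [abs_mul]
      calc |A (j + k + 1) / A j| * |τ| ≤ 1 * 1 :=
            mul_le_mul (hrone j k) hτ' (abs_nonneg _) (by norm_num)
        _ = 1 := by norm_num
    exact ⟨(abs_le.mp this).1, (abs_le.mp this).2⟩
  have hbound : ∀ j k : ℕ, ∀ τ ∈ Set.Icc (-1 : ℝ) 1,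
      |(A (j + k + 1) / A j) * φ (j + k) ((A (j + k + 1) / A j) * τ)| ≤ C * (1 / 2) ^ (k + 1) := by
    intro j k τ hτ
    rw [abs_mul, mul_comm]
    exact mul_le_mul (hφb _ _ (hmem j k τ hτ)) (hrabs j k) (abs_nonneg _) hC
  have hgeo : Summable (fun k : ℕ => ((1 : ℝ) / 2) ^ (k + 1)) := by
    simp only [pow_succ']
    exact (summable_geometric_of_lt_one (by norm_num) (by norm_num : (1 / 2 : ℝ) < 1)).mul_left _
  have hu : Summable (fun k : ℕ => C * ((1 : ℝ) / 2) ^ (k + 1)) := hgeo.mul_left C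
  have htsumu : ∑' k : ℕ, C * ((1 : ℝ) / 2) ^ (k + 1) = C := by
    rw [tsum_mul_left]
    have h1 : ∑' k : ℕ, ((1 : ℝ) / 2) ^ (k + 1) = 1 := by
      have h2 : ∑' k : ℕ, ((1 : ℝ) / 2) ^ k = 2 := by
        rw [tsum_geometric_of_lt_one (by norm_num) (by norm_num)]; norm_num
      calc ∑' k : ℕ, ((1 : ℝ) / 2) ^ (k + 1)
          = ∑' k : ℕ, (1 / 2 : ℝ) * (1 / 2) ^ k := by simp [pow_succ']
        _ = (1 / 2 : ℝ) * ∑' k : ℕ, ((1 : ℝ) / 2) ^ k := tsum_mul_left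
        _ = 1 := by rw [h2]; norm_num
    rw [h1, mul_one]
  -- absolute summability
  have habs : ∀ j : ℕ, ∀ τ ∈ Set.Icc (-1 : ℝ) 1,
      Summable (fun k : ℕ => |(A (j + k + 1) / A j) * φ (j + k) ((A (j + k + 1) / A j) * τ)|) :=
    fun j τ hτ => Summable.of_nonneg_of_le (fun k => abs_nonneg _)
      (fun k => hbound j k τ hτ) hu
  have hsummable : ∀ j : ℕ, ∀ τ ∈ Set.Icc (-1 : ℝ) 1,
      Summable (fun k : ℕ => (A (j + k + 1) / A j) * φ (j + k) ((A (j + k + 1) / A j) * τ)) :=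
    fun j τ hτ => (habs j τ hτ).of_abs
  -- uniform convergence
  have huni : ∀ j : ℕ, TendstoUniformlyOn
      (fun (N : ℕ) (τ : ℝ) =>
        - ∑ k ∈ Finset.range N, (A (j + k + 1) / A j) * φ (j + k) ((A (j + k + 1) / A j) * τ))
      (g j) atTop (Set.Icc (-1) 1) := by
    intro j
    have hgj : g j = fun τ =>
        -∑' k : ℕ, (A (j + k + 1) / A j) * φ (j + k) ((A (j + k + 1) / A j) * τ) :=
      funext (hg j)
    rw [hgj]
    exact tuo_neg (tendstoUniformlyOn_tsum_nat hu
      (fun k τ hτ => by rw [Real.norm_eq_abs]; exact hbound j k τ hτ))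
  -- continuity
  have hcont : ∀ j : ℕ, ContinuousOn (g j) (Set.Icc (-1) 1) := by
    intro j
    refine (huni j).continuousOn (Frequently.of_forall fun N => ?_)
    refine (continuousOn_finset_sum _ fun k _ => ?_).neg
    refine continuousOn_const.mul ((hφc (j + k)).comp
      ((continuous_const.mul continuous_id).continuousOn) (fun τ hτ => hmem j k τ hτ))
  -- bound
  have hgb : ∀ j : ℕ, ∀ τ ∈ Set.Icc (-1 : ℝ) 1, |g j τ| ≤ C := by
    intro j τ hτ
    rw [hg j τ, abs_neg]
    have hup : ∑' k : ℕ, |(A (j + k + 1) / A j) * φ (j + k) ((A (j + k + 1) / A j) * τ)|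
        ≤ C :=
      htsumu ▸ Summable.tsum_le_tsum (fun k => hbound j k τ hτ) (habs j τ hτ) hu
    have h1 : ∑' k : ℕ, (A (j + k + 1) / A j) * φ (j + k) ((A (j + k + 1) / A j) * τ)
        ≤ ∑' k : ℕ, |(A (j + k + 1) / A j) * φ (j + k) ((A (j + k + 1) / A j) * τ)| :=
      Summable.tsum_le_tsum (fun k => le_abs_self _) (hsummable j τ hτ) (habs j τ hτ)
    have h2 : -∑' k : ℕ, (A (j + k + 1) / A j) * φ (j + k) ((A (j + k + 1) / A j) * τ)
        ≤ ∑' k : ℕ, |(A (j + k + 1) / A j) * φ (j + k) ((A (j + k + 1) / A j) * τ)| := by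
      rw [← tsum_neg]
      exact Summable.tsum_le_tsum (fun k => neg_le_abs _) (hsummable j τ hτ).neg (habs j τ hτ)
    exact abs_le.mpr ⟨by linarith, by linarith⟩
  -- recursion
  refine ⟨habs, huni, hcont, hgb, ?_⟩
  intro j τ hτ
  have hAstep : A (j + 1) = A j * a j := by
    rw [hA, hA, Finset.prod_range_succ]
  have hr0 : A (j + 0 + 1) / A j = a j := by
    rw [show j + 0 + 1 = j + 1 by ring, hAstep, mul_comm, mul_div_assoc, div_self (hAne j), mul_one]
  have hshift : ∀ k : ℕ, A (j + (k + 1) + 1) / A j = a j * (A (j + 1 + k + 1) / A (j + 1)) := by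
    intro k
    rw [show j + (k + 1) + 1 = j + 1 + k + 1 by ring, hAstep, mul_comm (A j) (a j),
      ← mul_div_assoc, mul_div_mul_left _ _ (ha0 j)]
  rw [hg j τ, hg (j + 1) (a j * τ)]
  rw [Summable.tsum_eq_zero_add (hsummable j τ hτ)]
  have hterm : ∀ k : ℕ,
      (A (j + (k + 1) + 1) / A j) * φ (j + (k + 1)) ((A (j + (k + 1) + 1) / A j) * τ)
      = a j * ((A (j + 1 + k + 1) / A (j + 1)) *
          φ (j + 1 + k) ((A (j + 1 + k + 1) / A (j + 1)) * (a j * τ))) := by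
    intro k
    rw [hshift k, show j + (k + 1) = j + 1 + k by ring]
    ring_nf
  rw [tsum_congr hterm, tsum_mul_left, hr0]
  generalize (∑' (k : ℕ), A (j + 1 + k + 1) / A (j + 1) *
      φ (j + 1 + k) (A (j + 1 + k + 1) / A (j + 1) * (a j * τ))) = T
  ring
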